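/- A strongly connected digraph is a cactus digraph if and only if any two distinct simple cycles share at most one vertex. -/

import Mathlib

structure DirGraph (V : Type) where
  Adj : V → V → Prop
  loopless : ∀ v, ¬ Adj v v

namespace DirGraph

variable {V V' : Type}

/-- A walk is a nonempty list of vertices with consecutive arcs. -/
def IsWalk (G : DirGraph V) : List V → Prop
  | [] => False
  | [_] => True
  | a :: b :: l => G.Adj a b ∧ G.IsWalk (b :: l)

def IsWalkFromTo (G : DirGraph V) (p : List V) (x y : V) : Prop :=
  G.IsWalk p ∧ p.head? = some x ∧ p.getLast? = some y

def StronglyConnected (G : DirGraph V) : Prop :=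
  ∀ x y : V, ∃ p, G.IsWalkFromTo p x y

def IsSimplePath (G : DirGraph V) (p : List V) : Prop :=
  G.IsWalk p ∧ p.Nodup

def IsSimplePathFromTo (G : DirGraph V) (p : List V) (x y : V) : Prop :=
  G.IsSimplePath p ∧ p.head? = some x ∧ p.getLast? = some y

/-- The arcs of a walk given as a list of vertices. -/
def arcs (p : List V) : List (V × V) := p.zip p.tail

/-- The preterminal (second-to-last) vertex of a path. -/
def preterminal (p : List V) : Option V := p.dropLast.getLast?

/-- A simple cycle: a closed walk whose vertices are distinct except for the
repeated endpoint. -/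
def IsSimpleCycle (G : DirGraph V) (p : List V) : Prop :=
  G.IsWalk p ∧ 2 ≤ p.length ∧ p.head? = p.getLast? ∧ p.dropLast.Nodup

/-- Two cycles are equal as cycles when they have the same set of arcs. -/
def CycleEquiv (p q : List V) : Prop :=
  ∀ a : V × V, a ∈ arcs p ↔ a ∈ arcs q

/-- Each arc lies in exactly one simple cycle (up to arc-set equality). -/
def CactusArcCond (G : DirGraph V) : Prop :=
  ∀ x y, G.Adj x y →
    (∃ p, G.IsSimpleCycle p ∧ (x, y) ∈ arcs p) ∧
    (∀ p q, G.IsSimpleCycle p → (x, y) ∈ arcs p →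
      G.IsSimpleCycle q → (x, y) ∈ arcs q → CycleEquiv p q)

/-- A cactus digraph: strongly connected and each arc lies in exactly one
simple cycle. -/
def IsCactus (G : DirGraph V) : Prop :=
  G.StronglyConnected ∧ G.CactusArcCond

noncomputable def inDeg (G : DirGraph V) (v : V) : ℕ := Nat.card {u // G.Adj u v}
noncomputable def outDeg (G : DirGraph V) (v : V) : ℕ := Nat.card {u // G.Adj v u}

/-- A connecting point: a vertex shared by two distinct simple cycles. -/
def IsConnectingPoint (G : DirGraph V) (v : V) : Prop :=
  ∃ p q, G.IsSimpleCycle p ∧ G.IsSimpleCycle q ∧ ¬ CycleEquiv p q ∧ v ∈ p ∧ v ∈ q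

/-- An expansion of digraphs. -/
structure IsExpansion (G' : DirGraph V') (G : DirGraph V) (φ : V' → V) : Prop where
  map_adj : ∀ ⦃x y⦄, G'.Adj x y → G.Adj (φ x) (φ y)
  vert_surj : Function.Surjective φ
  arc_surj : ∀ ⦃x y⦄, G.Adj x y → ∃ x' y', G'.Adj x' y' ∧ φ x' = x ∧ φ y' = y
  lift : ∀ ⦃x y⦄, G.Adj x y → ∀ y', φ y' = y → ∃! x', G'.Adj x' y' ∧ φ x' = x

/-- A doubly bidirectionally connected pair. -/
def Dbcp (G : DirGraph V) (p q : V) : Prop :=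
  p ≠ q ∧
  (∃ P Q, G.IsSimplePathFromTo P p q ∧ G.IsSimplePathFromTo Q p q ∧
    preterminal P ≠ preterminal Q) ∧
  (∃ P Q, G.IsSimplePathFromTo P q p ∧ G.IsSimplePathFromTo Q q p ∧
    preterminal P ≠ preterminal Q)

/-- Subgraph of a digraph: a vertex subset together with a subrelation of arcs
supported on it. -/
structure Subgraph (G : DirGraph V) where
  verts : Set V
  Adj : V → V → Prop
  adj_sub : ∀ ⦃x y⦄, Adj x y → G.Adj x y
  mem_left : ∀ ⦃x y⦄, Adj x y → x ∈ verts
  mem_right : ∀ ⦃x y⦄, Adj x y → y ∈ verts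

def Subgraph.toDirGraph {G : DirGraph V} (H : Subgraph G) : DirGraph V :=
  ⟨H.Adj, fun v h => G.loopless v (H.adj_sub h)⟩

/-- A sub-cactus digraph: a nonempty subgraph that is strongly connected (on
its vertex set) and in which each arc lies in exactly one simple cycle. -/
def Subgraph.IsCactus {G : DirGraph V} (H : Subgraph G) : Prop :=
  H.verts.Nonempty ∧
  (∀ x ∈ H.verts, ∀ y ∈ H.verts, ∃ p, H.toDirGraph.IsWalkFromTo p x y) ∧
  H.toDirGraph.CactusArcCond

def Subgraph.inter {G : DirGraph V} (H K : Subgraph G) : Subgraph G where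
  verts := H.verts ∩ K.verts
  Adj x y := H.Adj x y ∧ K.Adj x y
  adj_sub := fun _ _ h => H.adj_sub h.1
  mem_left := fun _ _ h => ⟨H.mem_left h.1, K.mem_left h.2⟩
  mem_right := fun _ _ h => ⟨H.mem_right h.1, K.mem_right h.2⟩

def Subgraph.le {G : DirGraph V} (H K : Subgraph G) : Prop :=
  H.verts ⊆ K.verts ∧ ∀ ⦃x y⦄, H.Adj x y → K.Adj x y

/-- The single-vertex subgraph. -/
def singleVert (G : DirGraph V) (v : V) : Subgraph G where
  verts := {v}
  Adj _ _ := False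
  adj_sub := by intro _ _ h; exact h.elim
  mem_left := by intro _ _ h; exact h.elim
  mem_right := by intro _ _ h; exact h.elim

/-- The intersection of all sub-cactus digraphs of `G` containing `W`. -/
def CsubOf (G : DirGraph V) (W : Set V) : Subgraph G where
  verts := {x | ∀ H : Subgraph G, H.IsCactus → W ⊆ H.verts → x ∈ H.verts}
  Adj x y := G.Adj x y ∧ ∀ H : Subgraph G, H.IsCactus → W ⊆ H.verts → H.Adj x y
  adj_sub := fun _ _ h => h.1
  mem_left := fun _ _ h H hH hW => H.mem_left (h.2 H hH hW)
  mem_right := fun _ _ h H hH hW => H.mem_right (h.2 H hH hW)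

open Classical in
/-- `C G r v`: the minimum sub-cactus digraph containing `{r, v}` (and the
single vertex `{r}` when `v = r`). -/
noncomputable def C (G : DirGraph V) (r v : V) : Subgraph G :=
  if v = r then singleVert G r else CsubOf G {r, v}

/-- The preorder on vertices of the rooted cactus digraph `(G, r)`:
`v ≼ w ↔ C(v) ⊆ C(w)`. -/
def pre (G : DirGraph V) (r v w : V) : Prop :=
  Subgraph.le (C G r v) (C G r w)

end DirGraph

namespace DirGraph

section Aux

variable {V : Type} {G : DirGraph V}

open List

lemma isWalk_iff {p : List V} : G.IsWalk p ↔ p ≠ [] ∧ p.IsChain G.Adj := by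
  induction p with
  | nil => simp [IsWalk]
  | cons a l ih =>
    cases l with
    | nil => simp [IsWalk, List.isChain_singleton]
    | cons b m =>
      simp only [IsWalk, ih, List.isChain_cons_cons]
      constructor
      · rintro ⟨h1, h2, h3⟩; exact ⟨by simp, h1, h3⟩
      · rintro ⟨_, h1, h3⟩; exact ⟨h1, by simp, h3⟩

lemma arcs_cons_cons (a b : V) (l : List V) :
    arcs (a :: b :: l) = (a, b) :: arcs (b :: l) := rfl

lemma arcs_single (a : V) : arcs [a] = [] := rfl

lemma arcs_append (s : List V) (b : V) (t : List V) :
    arcs (s ++ b :: t) = arcs (s ++ [b]) ++ arcs (b :: t) := by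
  induction s with
  | nil => rfl
  | cons a s ih =>
    cases s with
    | nil => simp [arcs_cons_cons, arcs_single]
    | cons c s' =>
      simp only [List.cons_append] at ih ⊢
      rw [arcs_cons_cons, arcs_cons_cons, ih, List.cons_append]

lemma mem_of_mem_arcs : ∀ {p : List V} {x y : V}, (x, y) ∈ arcs p → x ∈ p ∧ y ∈ p := by
  intro p
  induction p with
  | nil => simp [arcs]
  | cons a l ih =>
    cases l with
    | nil => simp [arcs]
    | cons b m =>
      intro x y h
      rw [arcs_cons_cons, List.mem_cons] at h
      rcases h with h | h
      · obtain ⟨rfl, rfl⟩ := Prod.mk.injEq .. ▸ h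
        simp
      · have := ih h
        exact ⟨List.mem_cons_of_mem _ this.1, List.mem_cons_of_mem _ this.2⟩

lemma snd_mem_tail_of_mem_arcs :
    ∀ {l : List V} {a x y : V}, (x, y) ∈ arcs (a :: l) → y ∈ l := by
  intro l
  induction l with
  | nil => intro a x y h; simp [arcs_single] at h
  | cons b m ih =>
    intro a x y h
    rw [arcs_cons_cons, List.mem_cons] at h
    rcases h with h | h
    · obtain ⟨rfl, rfl⟩ := Prod.mk.injEq .. ▸ h
      simp
    · exact List.mem_cons_of_mem _ (ih h)

lemma adj_of_mem_arcs : ∀ {p : List V}, G.IsWalk p → ∀ {x y : V},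
    (x, y) ∈ arcs p → G.Adj x y := by
  intro p
  induction p with
  | nil => simp [arcs]
  | cons a l ih =>
    cases l with
    | nil => intro _ x y h; simp [arcs_single] at h
    | cons b m =>
      intro hw x y h
      rw [arcs_cons_cons, List.mem_cons] at h
      rcases h with h | h
      · obtain ⟨rfl, rfl⟩ := Prod.mk.injEq .. ▸ h
        exact hw.1
      · exact ih hw.2 h

lemma head_arc_mem {a : V} {l : List V} {b : V} (hb : l.head? = some b) :
    (a, b) ∈ arcs (a :: l) := by
  cases l with
  | nil => simp at hb
  | cons c m =>
    obtain rfl : c = b := by simpa using hb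
    rw [arcs_cons_cons]; exact List.mem_cons_self

lemma last_arc_mem : ∀ {d : List V} {u : V}, d.getLast? = some u → ∀ (x : V),
    (u, x) ∈ arcs (d ++ [x]) := by
  intro d
  induction d with
  | nil => simp
  | cons c d' ih =>
    cases d' with
    | nil =>
      intro u hu x
      obtain rfl : c = u := by simpa using hu
      simp [arcs_cons_cons]
    | cons e m =>
      intro u hu x
      rw [List.getLast?_cons_cons] at hu
      rw [List.cons_append, List.cons_append, arcs_cons_cons, ← List.cons_append]
      exact List.mem_cons_of_mem _ (ih hu x)

lemma exists_dup_decomp : ∀ {l : List V}, ¬ l.Nodup →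
    ∃ (a : V) (s t u : List V), l = s ++ a :: t ++ a :: u := by
  intro l
  induction l with
  | nil => intro h; simp at h
  | cons b l ih =>
    intro h
    rw [List.nodup_cons] at h
    by_cases hb : b ∈ l
    · obtain ⟨t, u, rfl⟩ := List.append_of_mem hb
      exact ⟨b, [], t, u, rfl⟩
    · have : ¬ l.Nodup := fun hn => h ⟨hb, hn⟩
      obtain ⟨a, s, t, u, rfl⟩ := ih this
      exact ⟨a, b :: s, t, u, rfl⟩

lemma chain'_splice {R : V → V → Prop} {s t u : List V} {a : V}
    (h : List.IsChain R (s ++ a :: t ++ a :: u)) : List.IsChain R (s ++ a :: u) := by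
  rw [List.isChain_append] at h
  obtain ⟨h1, h2, h3⟩ := h
  rw [List.isChain_append] at h1 ⊢
  obtain ⟨h1a, h1b, h1c⟩ := h1
  refine ⟨h1a, h2, fun b hb c hc => ?_⟩
  simp only [List.head?_cons, Option.mem_some_iff] at hc
  subst hc
  exact h1c b hb a (by simp)

lemma getLast_not_mem_dropLast {l : List V} (h : l.Nodup) {x : V}
    (hx : l.getLast? = some x) : x ∉ l.dropLast := by
  have hd : l.dropLast ++ [x] = l := List.dropLast_append_getLast? _ (by simpa using hx)
  rw [← hd] at h
  have := List.disjoint_of_nodup_append h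
  intro hmem
  exact this hmem (List.mem_singleton_self x)

lemma exists_simplePath_aux (x y : V) :
    ∀ n (p : List V), p.length ≤ n → G.IsWalkFromTo p x y →
      ∃ q, G.IsSimplePathFromTo q x y := by
  intro n
  induction n with
  | zero =>
    intro p hp hw
    cases p with
    | nil => exact absurd hw.1 (by simp [IsWalk])
    | cons a l => simp at hp
  | succ n ih =>
    intro p hp hw
    by_cases hnd : p.Nodup
    · exact ⟨p, ⟨hw.1, hnd⟩, hw.2⟩
    · obtain ⟨a, s, t, u, rfl⟩ := exists_dup_decomp hnd
      obtain ⟨hwalk, hh, hl⟩ := hw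
      rw [isWalk_iff] at hwalk
      refine ih (s ++ a :: u) ?_ ⟨isWalk_iff.2 ⟨by simp, chain'_splice hwalk.2⟩, ?_, ?_⟩
      · simp only [List.length_append, List.length_cons] at hp ⊢
        omega
      · cases s <;> simpa using hh
      · rw [List.getLast?_append_cons] at hl ⊢
        exact hl

lemma exists_cycle_of_adj (hG : G.StronglyConnected) {x y : V} (hxy : G.Adj x y) :
    ∃ p, G.IsSimpleCycle p ∧ (x, y) ∈ arcs p := by
  obtain ⟨w, hw⟩ := hG y x
  obtain ⟨q, ⟨hqw, hqn⟩, hqh, hql⟩ := exists_simplePath_aux y x w.length w le_rfl hw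
  have hqne : q ≠ [] := by rintro rfl; simp at hqh
  refine ⟨x :: q, ⟨?_, ?_, ?_, ?_⟩, head_arc_mem hqh⟩
  · rw [isWalk_iff]
    refine ⟨by simp, List.isChain_cons.2 ⟨?_, (isWalk_iff.1 hqw).2⟩⟩
    intro c hc
    rw [hqh] at hc
    simp only [Option.mem_some_iff] at hc
    subst hc
    exact hxy
  · cases q with
    | nil => exact absurd rfl hqne
    | cons c m => simp
  · rw [List.head?_cons]
    cases q with
    | nil => exact absurd rfl hqne
    | cons c m => rw [List.getLast?_cons_cons, hql]
  · have hx1 : x ∉ q.dropLast := getLast_not_mem_dropLast hqn hql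
    cases q with
    | nil => exact absurd rfl hqne
    | cons c m =>
      rw [List.dropLast_cons₂, List.nodup_cons]
      exact ⟨hx1, List.Nodup.sublist (List.dropLast_sublist _) hqn⟩

lemma exists_in_arc {D : List V} (h2 : 2 ≤ D.length) {x : V}
    (hl : D.getLast? = some x) : ∃ u, (u, x) ∈ arcs D := by
  have hne : D ≠ [] := by rintro rfl; simp at h2
  have hd : D.dropLast ++ [x] = D := List.dropLast_append_getLast? _ (by simpa using hl)
  have hdne : D.dropLast ≠ [] := by
    intro h
    rw [h] at hd
    rw [← hd] at h2
    simp at h2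
  obtain ⟨u, hu⟩ := List.getLast?_isSome.mpr hdne |> Option.isSome_iff_exists.mp
  exact ⟨u, by rw [← hd]; exact last_arc_mem hu x⟩

lemma extract_cycle (x : V) :
    ∀ n (l : List V), l.length ≤ n → l ≠ [] → x ∉ l →
      List.IsChain G.Adj (x :: l ++ [x]) → ∀ h, l.head? = some h →
      ∃ D, G.IsSimpleCycle D ∧ D.getLast? = some x ∧ (x, h) ∈ arcs D ∧
        ∀ a ∈ arcs D, a ∈ arcs (x :: l ++ [x]) := by
  intro n
  induction n with
  | zero =>
    intro l hl hne
    cases l with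
    | nil => exact absurd rfl hne
    | cons a m => simp at hl
  | succ n ih =>
    intro l hlen hne hx hch h hh
    by_cases hnd : l.Nodup
    · refine ⟨x :: l ++ [x], ⟨isWalk_iff.2 ⟨by simp, hch⟩, by simp, ?_, ?_⟩, ?_, ?_, fun a ha => ha⟩
      · rw [show x :: l ++ [x] = (x :: l) ++ [x] from rfl, List.getLast?_concat]
        rfl
      · rw [show x :: l ++ [x] = (x :: l) ++ [x] from rfl, List.dropLast_concat]
        exact List.nodup_cons.2 ⟨hx, hnd⟩
      · rw [show x :: l ++ [x] = (x :: l) ++ [x] from rfl, List.getLast?_concat]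
      · exact head_arc_mem (by cases l with
          | nil => exact absurd rfl hne
          | cons c m => simpa using hh)
    · obtain ⟨a, s, t, u, rfl⟩ := exists_dup_decomp hnd
      have hform : x :: (s ++ a :: t ++ a :: u) ++ [x]
          = (x :: s) ++ a :: t ++ a :: (u ++ [x]) := by simp
      have hform' : x :: (s ++ a :: u) ++ [x] = (x :: s) ++ a :: (u ++ [x]) := by simp
      have hch' : List.IsChain G.Adj (x :: (s ++ a :: u) ++ [x]) := by
        rw [hform']
        exact chain'_splice (by rw [← hform]; exact hch)
      have hmemsub : ∀ w : V, w ∈ s ++ a :: u → w ∈ s ++ a :: t ++ a :: u := by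
        intro w hw
        simp only [List.mem_append, List.mem_cons] at hw ⊢
        tauto
      have hx' : x ∉ s ++ a :: u := fun hmem => hx (hmemsub x hmem)
      have hne' : s ++ a :: u ≠ [] := by simp
      have hh' : (s ++ a :: u).head? = some h := by
        cases s with
        | nil => simpa using hh
        | cons b s' => simpa using hh
      have hlen' : (s ++ a :: u).length ≤ n := by
        simp only [List.length_append, List.length_cons] at hlen ⊢
        omega
      obtain ⟨D, hD, hDl, hDf, hDsub⟩ := ih (s ++ a :: u) hlen' hne' hx' hch' h hh'
      refine ⟨D, hD, hDl, hDf, fun b hb => ?_⟩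
      have hb' := hDsub b hb
      rw [hform', arcs_append (x :: s) a (u ++ [x])] at hb'
      have e3 : (x :: s) ++ a :: t ++ a :: (u ++ [x])
          = (x :: s) ++ a :: (t ++ a :: (u ++ [x])) := by simp
      have e4 : arcs (a :: (t ++ a :: (u ++ [x])))
          = arcs ((a :: t) ++ a :: (u ++ [x])) := by simp
      rw [hform, e3, arcs_append (x :: s) a (t ++ a :: (u ++ [x])), e4,
        arcs_append (a :: t) a (u ++ [x])]
      simp only [List.mem_append] at hb' ⊢
      tauto

lemma rotate_cycle {p : List V} (hp : G.IsSimpleCycle p) {v : V} (hv : v ∈ p) :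
    ∃ p', G.IsSimpleCycle p' ∧ p'.head? = some v ∧
      (∀ a, a ∈ arcs p' ↔ a ∈ arcs p) ∧ (∀ w, w ∈ p' ↔ w ∈ p) := by
  obtain ⟨hw, hlen, hhl, hnd⟩ := hp
  have hpne : p ≠ [] := by rintro rfl; simp at hlen
  set d := p.dropLast with hd
  have hdl : d ++ [p.getLast hpne] = p := List.dropLast_append_getLast hpne
  have hlast : p.getLast? = some (p.getLast hpne) := List.getLast?_eq_getLast _
  set z := p.getLast hpne with hz
  have hdne : d ≠ [] := by
    intro h
    rw [h] at hdl
    rw [← hdl] at hlen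
    simp at hlen
  obtain ⟨c, d₁, hcd⟩ := List.exists_cons_of_ne_nil hdne
  have hheadp : p.head? = some z := hhl.trans hlast
  have hcz : c = z := by
    rw [← hdl, hcd] at hheadp
    simpa using hheadp
  subst hcz
  by_cases hvz : v = z
  · subst hvz
    exact ⟨p, ⟨hw, hlen, hhl, hnd⟩, hheadp, fun a => Iff.rfl, fun w => Iff.rfl⟩
  · have hvd : v ∈ d₁ := by
      rw [← hdl, hcd] at hv
      simp only [List.mem_append, List.mem_cons, List.mem_singleton] at hv
      tauto
    obtain ⟨s, t, rfl⟩ := List.append_of_mem hvd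
    have hpeq : p = (z :: s) ++ v :: (t ++ [z]) := by
      rw [← hdl, hcd]; simp
    have hchp : List.IsChain G.Adj p := (isWalk_iff.1 hw).2
    rw [hpeq, List.isChain_append] at hchp
    obtain ⟨C1, C2, L⟩ := hchp
    have Czsv : List.IsChain G.Adj ((z :: s) ++ [v]) := by
      rw [List.isChain_append]
      refine ⟨C1, List.isChain_singleton v, fun b hb c hc => ?_⟩
      simp only [List.head?_cons, Option.mem_some_iff] at hc
      subst hc
      exact L b hb v (by simp)
    have Csv : List.IsChain G.Adj (s ++ [v]) ∧ ∀ c ∈ (s ++ [v]).head?, G.Adj z c := by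
      rw [show (z :: s) ++ [v] = z :: (s ++ [v]) from rfl, List.isChain_cons] at Czsv
      exact ⟨Czsv.2, Czsv.1⟩
    have hform2 : (v :: t) ++ z :: (s ++ [v]) = (v :: t ++ z :: s) ++ [v] := by simp
    refine ⟨(v :: t) ++ z :: (s ++ [v]), ⟨?_, ?_, ?_, ?_⟩, rfl, ?_, ?_⟩
    · rw [isWalk_iff]
      refine ⟨by simp, ?_⟩
      have hform : (v :: t) ++ z :: (s ++ [v]) = (v :: t ++ [z]) ++ (s ++ [v]) := by simp
      rw [hform, List.isChain_append]
      refine ⟨C2, Csv.1, ?_⟩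
      intro b hb c hc
      rw [show v :: t ++ [z] = (v :: t) ++ [z] from rfl, List.getLast?_concat] at hb
      simp only [Option.mem_some_iff] at hb
      subst hb
      exact Csv.2 c hc
    · simp only [List.length_append, List.length_cons]; omega
    · rw [hform2, List.getLast?_concat]; rfl
    · rw [hform2, List.dropLast_concat]
      have hperm : (v :: t ++ z :: s).Perm d := by
        rw [hcd]
        calc (v :: t) ++ (z :: s) ~ (z :: s) ++ (v :: t) := List.perm_append_comm
          _ = z :: (s ++ v :: t) := by simp
      exact hperm.symm.nodup hnd
    · intro a
      rw [arcs_append (v :: t) z (s ++ [v]), hpeq,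
        arcs_append (z :: s) v (t ++ [z])]
      simp only [List.cons_append, List.mem_append]
      tauto
    · intro w
      rw [hpeq]
      simp only [List.cons_append, List.mem_append, List.mem_cons,
        List.mem_singleton, List.not_mem_nil]
      tauto

lemma split_cycle {p : List V} (hp : G.IsSimpleCycle p) {v y : V}
    (hh : p.head? = some v) (hy : y ∈ p) (hne : y ≠ v) :
    ∃ s t : List V,
      (v :: (s ++ [y])).Nodup ∧ ((y :: t) ++ [v]).Nodup ∧
      List.IsChain G.Adj (v :: (s ++ [y])) ∧ List.IsChain G.Adj (y :: (t ++ [v])) ∧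
      (∀ a, a ∈ arcs p ↔ a ∈ arcs (v :: (s ++ [y])) ∨ a ∈ arcs (y :: (t ++ [v]))) := by
  obtain ⟨hw, hlen, hhl, hnd⟩ := hp
  have hpne : p ≠ [] := by rintro rfl; simp at hh
  set d := p.dropLast with hd
  have hdl : d ++ [p.getLast hpne] = p := List.dropLast_append_getLast hpne
  have hlast : p.getLast? = some (p.getLast hpne) := List.getLast?_eq_getLast _
  have hgl : p.getLast? = some v := by rw [← hhl]; exact hh
  have hzv : p.getLast hpne = v := by
    rw [hlast] at hgl; simpa using hgl
  rw [hzv] at hdl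
  have hdne : d ≠ [] := by
    intro h
    rw [h] at hdl
    rw [← hdl] at hlen
    simp at hlen
  obtain ⟨c, d₀, hcd⟩ := List.exists_cons_of_ne_nil hdne
  have hcv : c = v := by
    rw [← hdl, hcd] at hh
    simpa using hh
  rw [hcv] at hcd
  have hyd : y ∈ d₀ := by
    rw [← hdl, hcd] at hy
    simp only [List.cons_append, List.mem_cons, List.mem_append,
      List.mem_singleton] at hy
    tauto
  obtain ⟨s, t, rfl⟩ := List.append_of_mem hyd
  have hpeq : p = (v :: s) ++ y :: (t ++ [v]) := by rw [← hdl, hcd]; simp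
  have hnd' : (v :: (s ++ y :: t)).Nodup := by rw [hcd] at hnd; exact hnd
  rw [List.nodup_cons] at hnd'
  have hAsub : (v :: (s ++ [y])) <+ v :: (s ++ y :: t) :=
    ((List.Sublist.append_left ((List.nil_sublist t).cons₂ y) s).cons₂ v)
  have hAnd : (v :: (s ++ [y])).Nodup :=
    List.Nodup.sublist hAsub (List.nodup_cons.2 hnd')
  have hytnd : (y :: t).Nodup :=
    List.Nodup.sublist (List.sublist_append_right s (y :: t)) hnd'.2
  have hvyt : v ∉ y :: t := fun hm => hnd'.1 (List.mem_append_right s hm)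
  have hBnd : ((y :: t) ++ [v]).Nodup := by
    rw [List.nodup_append]
    refine ⟨hytnd, by simp, ?_⟩
    intro a ha b ha'
    rw [List.mem_singleton] at ha'
    subst ha'
    exact fun hav => hvyt (hav ▸ ha)
  have hchp : List.IsChain G.Adj p := (isWalk_iff.1 hw).2
  rw [hpeq, List.isChain_append] at hchp
  obtain ⟨C1, C2, L⟩ := hchp
  have hAch : List.IsChain G.Adj ((v :: s) ++ [y]) := by
    rw [List.isChain_append]
    refine ⟨C1, List.isChain_singleton y, fun b hb c hc => ?_⟩
    simp only [List.head?_cons, Option.mem_some_iff] at hc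
    subst hc
    exact L b hb y (by simp)
  refine ⟨s, t, hAnd, hBnd, hAch, C2, ?_⟩
  intro a
  rw [hpeq, arcs_append (v :: s) y (t ++ [v])]
  simp only [List.cons_append, List.mem_append]

end Aux

end DirGraph

/-- A strongly connected digraph is a cactus digraph iff any two distinct
simple cycles share at most one vertex. -/
theorem isCactus_iff_cycles_share_at_most_one_vertex {V : Type}
    (G : DirGraph V) (hG : G.StronglyConnected) :
    G.IsCactus ↔
      ∀ p q, G.IsSimpleCycle p → G.IsSimpleCycle q → ¬ DirGraph.CycleEquiv p q →
        ∀ x y, x ∈ p → x ∈ q → y ∈ p → y ∈ q → x = y := by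
  constructor
  · rintro ⟨hSC, hArc⟩ p q hp hq hne x y hxp hxq hyp hyq
    by_contra hxy
    have hyx : y ≠ x := fun h => hxy h.symm
    have hdisj : ∀ a : V × V, a ∈ DirGraph.arcs p → a ∉ DirGraph.arcs q := by
      rintro ⟨u, w⟩ hup huq
      have hadj : G.Adj u w := DirGraph.adj_of_mem_arcs hp.1 hup
      exact hne ((hArc u w hadj).2 p q hp hup hq huq)
    obtain ⟨p₁, hp₁, hp₁h, hp₁a, hp₁m⟩ := DirGraph.rotate_cycle hp hxp
    obtain ⟨q₁, hq₁, hq₁h, hq₁a, hq₁m⟩ := DirGraph.rotate_cycle hq hxq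
    obtain ⟨s₁, t₁, hAnd, hBnd, hAch, hBch, hp₁arcs⟩ :=
      DirGraph.split_cycle hp₁ hp₁h ((hp₁m y).2 hyp) hyx
    obtain ⟨s₂, t₂, hA'nd, hB'nd, hA'ch, hB'ch, hq₁arcs⟩ :=
      DirGraph.split_cycle hq₁ hq₁h ((hq₁m y).2 hyq) hyx
    obtain ⟨h, hh⟩ : ∃ h, (s₁ ++ [y]).head? = some h := by
      cases s₁ <;> exact ⟨_, rfl⟩
    set l : List V := (s₁ ++ [y]) ++ t₂ with hl
    have hlh : l.head? = some h := by
      rw [hl, List.head?_append_of_ne_nil _ (by simp)]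
      exact hh
    have hxA : x ∉ s₁ ++ [y] := (List.nodup_cons.1 hAnd).1
    have hxB' : x ∉ y :: t₂ := by
      have := List.disjoint_of_nodup_append hB'nd
      intro hmem; exact this hmem (List.mem_singleton_self x)
    have hxl : x ∉ l := by
      rw [hl]
      intro hm
      rcases List.mem_append.1 hm with hm | hm
      · exact hxA hm
      · exact hxB' (List.mem_cons_of_mem _ hm)
    have hlne : l ≠ [] := by simp [hl]
    have hWch : List.IsChain G.Adj (x :: l ++ [x]) := by
      have hform : x :: l ++ [x] = (x :: (s₁ ++ [y])) ++ (t₂ ++ [x]) := by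
        rw [hl]; simp
      rw [hform, List.isChain_append]
      refine ⟨hAch, ?_, ?_⟩
      · exact (List.isChain_cons.1 hB'ch).2
      · intro b hb c hc
        rw [show x :: (s₁ ++ [y]) = (x :: s₁) ++ [y] from rfl,
          List.getLast?_concat] at hb
        simp only [Option.mem_some_iff] at hb
        subst hb
        exact (List.isChain_cons.1 hB'ch).1 c hc
    obtain ⟨D, hD, hDl, hDf, hDsub⟩ :=
      DirGraph.extract_cycle x l.length l le_rfl hlne hxl hWch h hlh
    have hxhA : (x, h) ∈ DirGraph.arcs (x :: (s₁ ++ [y])) := DirGraph.head_arc_mem hh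
    have hxhp : (x, h) ∈ DirGraph.arcs p :=
      (hp₁a _).1 ((hp₁arcs _).2 (Or.inl hxhA))
    have hadjxh : G.Adj x h := DirGraph.adj_of_mem_arcs hp.1 hxhp
    have hequiv := (hArc x h hadjxh).2 D p hD hDf hp hxhp
    obtain ⟨u, huD⟩ := DirGraph.exists_in_arc hD.2.1 hDl
    have huW := hDsub _ huD
    have hWarcs : (u, x) ∈ DirGraph.arcs (x :: (s₁ ++ [y])) ∨
        (u, x) ∈ DirGraph.arcs (y :: (t₂ ++ [x])) := by
      have hform : x :: l ++ [x] = (x :: s₁) ++ y :: (t₂ ++ [x]) := by rw [hl]; simp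
      rw [hform, DirGraph.arcs_append (x :: s₁) y (t₂ ++ [x])] at huW
      simpa only [List.cons_append, List.mem_append] using huW
    rcases hWarcs with hcase | hcase
    · exact hxA (DirGraph.snd_mem_tail_of_mem_arcs hcase)
    · have huq : (u, x) ∈ DirGraph.arcs q := (hq₁a _).1 ((hq₁arcs _).2 (Or.inr hcase))
      have hup : (u, x) ∈ DirGraph.arcs p := (hequiv _).1 huD
      exact hdisj _ hup huq
  · intro h
    refine ⟨hG, fun a b hab => ⟨DirGraph.exists_cycle_of_adj hG hab, ?_⟩⟩
    intro p q hp hap hq haq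
    by_contra hpq
    have hab' : a ≠ b := fun he => G.loopless a (he ▸ hab)
    exact hab' (h p q hp hq hpq a b (DirGraph.mem_of_mem_arcs hap).1
      (DirGraph.mem_of_mem_arcs haq).1 (DirGraph.mem_of_mem_arcs hap).2
      (DirGraph.mem_of_mem_arcs haq).2)
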